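/- Let G and G' be locally equivalent simple graphs on vertex set V (i.e., G' is obtained from G by a finite sequence of local complementations). Then for all X ⊆ V, the rank over GF(2) of A(G')[X, V∖X] equals the rank of A(G)[X, V∖X]. -/

import Mathlib

open Matrix
open scoped symmDiff

variable {V F : Type*} [Fintype V] [DecidableEq V] [Field F]

/-- Nullity of a matrix: dimension of the kernel of the associated linear map. -/
noncomputable def nullity {F : Type*} [Field F] {m n : Type*} [Fintype m] [Fintype n]
    (M : Matrix m n F) : ℕ :=
  Module.finrank F (LinearMap.ker M.mulVecLin)

/-- Submatrix A[X,Y]: rows indexed by X, columns by Y. -/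
def subm (A : Matrix V V F) (X Y : Finset V) : Matrix X Y F :=
  A.submatrix Subtype.val Subtype.val

/-- Principal pivot transform of A on Z, defined blockwise. -/
noncomputable def ppt (A : Matrix V V F) (Z : Finset V) : Matrix V V F :=
  fun i j =>
    if hi : i ∈ Z then
      if hj : j ∈ Z then (subm A Z Z)⁻¹ ⟨i, hi⟩ ⟨j, hj⟩
      else - ∑ k : Z, (subm A Z Z)⁻¹ ⟨i, hi⟩ k * A k j
    else
      if hj : j ∈ Z then ∑ k : Z, A i k * (subm A Z Z)⁻¹ k ⟨j, hj⟩
      else A i j - ∑ k : Z, ∑ l : Z, A i k * (subm A Z Z)⁻¹ k l * A l j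

/-- Local complement of a simple graph G at a vertex v: complement the subgraph
induced on the neighborhood of v. -/
def localComp {V : Type*} (G : SimpleGraph V) (v : V) : SimpleGraph V where
  Adj a b := a ≠ b ∧ Xor' (G.Adj a b) (G.Adj v a ∧ G.Adj v b)
  symm := ⟨by
    rintro a b ⟨hne, h⟩
    refine ⟨hne.symm, ?_⟩
    rwa [G.adj_comm b a, and_comm]⟩
  loopless := ⟨by rintro a ⟨h, -⟩; exact h rfl⟩

instance {V : Type*} [DecidableEq V] (G : SimpleGraph V) [DecidableRel G.Adj] (v : V) :
    DecidableRel (localComp G v).Adj :=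
  fun a b => decidable_of_iff (a ≠ b ∧ ((G.Adj a b ∧ ¬(G.Adj v a ∧ G.Adj v b)) ∨
    ((G.Adj v a ∧ G.Adj v b) ∧ ¬G.Adj a b))) Iff.rfl

/-- G and G' are locally equivalent if G' is obtained from G by a (possibly empty)
sequence of local complementations. -/
def LocallyEquivalent {V : Type*} (G G' : SimpleGraph V) : Prop :=
  Relation.ReflTransGen (fun H H' => ∃ v, H' = localComp H v) G G'


set_option linter.unusedSectionVars false
lemma localComp_adj {V : Type*} (G : SimpleGraph V) (v a b : V) :
    (localComp G v).Adj a b ↔ a ≠ b ∧ Xor' (G.Adj a b) (G.Adj v a ∧ G.Adj v b) := Iff.rfl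

lemma adjMatrix_congr (G : SimpleGraph V) (h1 h2 : DecidableRel G.Adj) :
    @SimpleGraph.adjMatrix (ZMod 2) V G h1 _ _ = @SimpleGraph.adjMatrix (ZMod 2) V G h2 _ _ := by
  have : h1 = h2 := Subsingleton.elim h1 h2
  rw [this]

lemma adjMatrix_localComp_apply (G : SimpleGraph V) [DecidableRel G.Adj]
    (v a b : V) (hab : a ≠ b) :
    SimpleGraph.adjMatrix (ZMod 2) (localComp G v) a b =
      SimpleGraph.adjMatrix (ZMod 2) G a b +
        SimpleGraph.adjMatrix (ZMod 2) G v a * SimpleGraph.adjMatrix (ZMod 2) G v b := by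
  simp only [SimpleGraph.adjMatrix_apply, localComp_adj, Xor']
  by_cases h1 : G.Adj a b <;> by_cases h2 : G.Adj v a <;> by_cases h3 : G.Adj v b <;>
    simp [Xor', h1, h2, h3, hab] <;> decide

lemma lc_step (G : SimpleGraph V) [DecidableRel G.Adj] (v : V) (X : Finset V) :
    (subm (SimpleGraph.adjMatrix (ZMod 2) (localComp G v)) X Xᶜ).rank =
      (subm (SimpleGraph.adjMatrix (ZMod 2) G) X Xᶜ).rank := by
  set A := SimpleGraph.adjMatrix (ZMod 2) G with hA
  set M := subm A X Xᶜ with hM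
  have hAvv : A v v = 0 := by simp [hA]
  have hAsymm : ∀ a b, A a b = A b a := by
    intro a b; simp [hA, SimpleGraph.adjMatrix_apply, G.adj_comm]
  have hM' : subm (SimpleGraph.adjMatrix (ZMod 2) (localComp G v)) X Xᶜ =
      Matrix.of (fun (i : X) (j : (Xᶜ : Finset V)) => M i j + A v i * A v j) := by
    ext i j
    have hij : (i : V) ≠ (j : V) := by
      intro h
      have := j.2
      rw [Finset.mem_compl, ← h] at this
      exact this i.2
    exact adjMatrix_localComp_apply G v i j hij
  have h2 : ∀ x : ZMod 2, x + x = 0 := by decide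
  by_cases hv : v ∈ X
  · -- row operation
    set i₀ : X := ⟨v, hv⟩ with hi₀
    set N : Matrix X X (ZMod 2) :=
      Matrix.vecMulVec (fun i : X => A v i) (fun k : X => if k = i₀ then 1 else 0) with hN
    set E : Matrix X X (ZMod 2) := 1 + N with hE
    have hNN : N * N = 0 := by
      ext i j
      simp only [Matrix.mul_apply, hN, Matrix.vecMulVec_apply, Matrix.zero_apply]
      simp [mul_ite, ite_mul, Finset.sum_ite_eq', hAvv, hi₀]
    have hEE : E * E = 1 := by
      have : E * E = 1 + (N + N) + N * N := by rw [hE]; noncomm_ring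
      rw [this, hNN]
      have : N + N = 0 := by ext i j; exact h2 _
      rw [this]; simp
    have hdet : IsUnit E.det := by
      refine IsUnit.of_mul_eq_one (a := E.det) E.det ?_
      rw [← Matrix.det_mul, hEE, Matrix.det_one]
    have hEM : E * M = Matrix.of (fun (i : X) (j : (Xᶜ : Finset V)) => M i j + A v i * A v j) := by
      ext i j
      rw [hE, Matrix.add_mul, Matrix.one_mul]
      simp only [Matrix.add_apply, Matrix.of_apply, Matrix.mul_apply, hN, Matrix.vecMulVec_apply]
      congr 1
      have : ∀ k : X, (A v i * if k = i₀ then 1 else 0) * M k j =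
          if k = i₀ then A v i * M i₀ j else 0 := by
        intro k; by_cases hk : k = i₀ <;> simp [hk]
      rw [Finset.sum_congr rfl (fun k _ => this k), Finset.sum_ite_eq' Finset.univ i₀]
      simp [hM, subm, hi₀]
    rw [hM', ← hEM, Matrix.rank_mul_eq_right_of_isUnit_det E M hdet]
  · -- column operation
    have hv' : v ∈ Xᶜ := Finset.mem_compl.2 hv
    set j₀ : (Xᶜ : Finset V) := ⟨v, hv'⟩ with hj₀
    set N : Matrix (Xᶜ : Finset V) (Xᶜ : Finset V) (ZMod 2) :=
      Matrix.vecMulVec (fun k : (Xᶜ : Finset V) => if k = j₀ then 1 else 0)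
        (fun j : (Xᶜ : Finset V) => A v j) with hN
    set E : Matrix (Xᶜ : Finset V) (Xᶜ : Finset V) (ZMod 2) := 1 + N with hE
    have hNN : N * N = 0 := by
      ext i j
      simp only [Matrix.mul_apply, hN, Matrix.vecMulVec_apply, Matrix.zero_apply]
      simp [mul_ite, ite_mul, Finset.sum_ite_eq', hAvv, hj₀]
    have hEE : E * E = 1 := by
      have : E * E = 1 + (N + N) + N * N := by rw [hE]; noncomm_ring
      rw [this, hNN]
      have : N + N = 0 := by ext i j; exact h2 _
      rw [this]; simp
    have hdet : IsUnit E.det := by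
      refine IsUnit.of_mul_eq_one (a := E.det) E.det ?_
      rw [← Matrix.det_mul, hEE, Matrix.det_one]
    have hME : M * E = Matrix.of (fun (i : X) (j : (Xᶜ : Finset V)) => M i j + A v i * A v j) := by
      ext i j
      rw [hE, Matrix.mul_add, Matrix.mul_one]
      simp only [Matrix.add_apply, Matrix.of_apply, Matrix.mul_apply, hN, Matrix.vecMulVec_apply]
      congr 1
      have : ∀ k : (Xᶜ : Finset V), M i k * ((if k = j₀ then 1 else 0) * A v j) =
          if k = j₀ then M i j₀ * A v j else 0 := by
        intro k; by_cases hk : k = j₀ <;> simp [hk]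
      rw [Finset.sum_congr rfl (fun k _ => this k), Finset.sum_ite_eq' Finset.univ j₀]
      simp only [Finset.mem_univ, if_true]
      have : M i j₀ = A v i := by simp [hM, subm, hj₀, hAsymm v i]
      rw [this]
    rw [hM', ← hME, Matrix.rank_mul_eq_left_of_isUnit_det E M hdet]


/-- The cut-rank over GF(2) is invariant under local equivalence (Bouchet). -/
theorem cutRank_locallyEquivalent {V : Type*} [Fintype V] [DecidableEq V]
    (G G' : SimpleGraph V) [DecidableRel G.Adj] [DecidableRel G'.Adj]
    (h : LocallyEquivalent G G') (X : Finset V) :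
    (subm (SimpleGraph.adjMatrix (ZMod 2) G') X Xᶜ).rank =
    (subm (SimpleGraph.adjMatrix (ZMod 2) G) X Xᶜ).rank := by
  
  have key : ∀ H : SimpleGraph V, LocallyEquivalent G H →
      (subm (@SimpleGraph.adjMatrix (ZMod 2) V H (Classical.decRel _) _ _) X Xᶜ).rank =
      (subm (SimpleGraph.adjMatrix (ZMod 2) G) X Xᶜ).rank := by
    intro H hH
    induction hH with
    | refl => rw [adjMatrix_congr G (Classical.decRel _) ‹DecidableRel G.Adj›]
    | @tail b c hb hbc ih =>
      obtain ⟨v, rfl⟩ := hbc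
      letI : DecidableRel b.Adj := Classical.decRel _
      rw [adjMatrix_congr (localComp b v) (Classical.decRel _) inferInstance,
        lc_step b v X]
      exact ih
  have hk := key G' h
  rwa [adjMatrix_congr G' (Classical.decRel _) ‹DecidableRel G'.Adj›] at hk
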